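/- Let b, e ∈ ℂ with e ≠ 0, let D₄(x) = 4ex³ + b, and let N₄,₁(x) = x(b − 8ex³), N₄,₂(x) = x²(b − 2ex³), N₄,₃(x) = b² − 28ebx³ + 16e²x⁶. Suppose K₁, K₂, K₃ ∈ ℂ are such that the function y = (K₁N₄,₁ + K₂N₄,₂ + K₃N₄,₃)/D₄³ satisfies the nonlinear equation (NL4): 72exy² + (b + 4ex³)(y')² + 84ex²yy' + (b + 4ex³)yy'' = 0 at every point of some nonempty open subset U ⊆ ℂ on which D₄ does not vanish. Then K₁ = K₂ = K₃ = 0. -/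

import Mathlib

/-- A degree-≤6 polynomial function given by its coefficients. -/
noncomputable def pol6 (c0 c1 c2 c3 c4 c5 c6 : ℂ) : ℂ → ℂ :=
  fun t => c0 + c1 * t + c2 * t ^ 2 + c3 * t ^ 3 + c4 * t ^ 4 + c5 * t ^ 5 + c6 * t ^ 6

lemma pol6_hasDerivAt (c0 c1 c2 c3 c4 c5 c6 z : ℂ) :
    HasDerivAt (pol6 c0 c1 c2 c3 c4 c5 c6)
      (pol6 c1 (2 * c2) (3 * c3) (4 * c4) (5 * c5) (6 * c6) 0 z) z := by
  have h := ((((((hasDerivAt_const z c0).add ((hasDerivAt_id z).const_mul c1)).add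
      ((hasDerivAt_pow 2 z).const_mul c2)).add
      ((hasDerivAt_pow 3 z).const_mul c3)).add
      ((hasDerivAt_pow 4 z).const_mul c4)).add
      ((hasDerivAt_pow 5 z).const_mul c5)).add
      ((hasDerivAt_pow 6 z).const_mul c6)
  have hv : 0 + c1 * 1 + c2 * (↑(2:ℕ) * z ^ (2-1)) + c3 * (↑(3:ℕ) * z ^ (3-1))
      + c4 * (↑(4:ℕ) * z ^ (4-1)) + c5 * (↑(5:ℕ) * z ^ (5-1)) + c6 * (↑(6:ℕ) * z ^ (6-1))
      = pol6 c1 (2 * c2) (3 * c3) (4 * c4) (5 * c5) (6 * c6) 0 z := by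
    simp only [pol6]; push_cast; ring
  exact hv ▸ h

set_option maxHeartbeats 4000000 in
/-- Let `e ≠ 0`, `D₄(x) = 4ex³ + b`, and let `N₄,₁, N₄,₂, N₄,₃` be
the explicit solutions of (L4). If `y = (K₁N₄,₁ + K₂N₄,₂ + K₃N₄,₃)/D₄³` satisfies
the nonlinear equation (NL4):
`72exy² + (b+4ex³)(y')² + 84ex²yy' + (b+4ex³)yy'' = 0`
on some nonempty open set `U` on which `D₄` does not vanish, then `K₁ = K₂ = K₃ = 0`. -/
theorem statement17
    (b e : ℂ) (he : e ≠ 0)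
    (D₄ N₄₁ N₄₂ N₄₃ : ℂ → ℂ)
    (hD₄ : ∀ x : ℂ, D₄ x = 4 * e * x ^ 3 + b)
    (hN₄₁ : ∀ x : ℂ, N₄₁ x = x * (b - 8 * e * x ^ 3))
    (hN₄₂ : ∀ x : ℂ, N₄₂ x = x ^ 2 * (b - 2 * e * x ^ 3))
    (hN₄₃ : ∀ x : ℂ, N₄₃ x = b ^ 2 - 28 * e * b * x ^ 3 + 16 * e ^ 2 * x ^ 6)
    (K₁ K₂ K₃ : ℂ)
    (y : ℂ → ℂ)
    (hy : ∀ x : ℂ, y x = (K₁ * N₄₁ x + K₂ * N₄₂ x + K₃ * N₄₃ x) / D₄ x ^ 3)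
    (U : Set ℂ) (hU : IsOpen U) (hUne : U.Nonempty)
    (hDU : ∀ x ∈ U, D₄ x ≠ 0)
    (hNL4 : ∀ x ∈ U,
      72 * e * x * (y x) ^ 2
        + (b + 4 * e * x ^ 3) * (deriv y x) ^ 2
        + 84 * e * x ^ 2 * y x * deriv y x
        + (b + 4 * e * x ^ 3) * y x * iteratedDeriv 2 y x = 0) :
    K₁ = 0 ∧ K₂ = 0 ∧ K₃ = 0 := by
  -- explicit polynomial data
  set P : ℂ → ℂ := pol6 (K₃*b^2) (K₁*b) (K₂*b) (-(28*e*b*K₃)) (-(8*e*K₁)) (-(2*e*K₂)) (16*e^2*K₃) with hPdef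
  set P1 : ℂ → ℂ := pol6 (K₁*b) (2*(K₂*b)) (3*(-(28*e*b*K₃))) (4*(-(8*e*K₁))) (5*(-(2*e*K₂))) (6*(16*e^2*K₃)) 0 with hP1def
  set P2 : ℂ → ℂ := pol6 (2*(K₂*b)) (2*(3*(-(28*e*b*K₃)))) (3*(4*(-(8*e*K₁)))) (4*(5*(-(2*e*K₂)))) (5*(6*(16*e^2*K₃))) (6*0) 0 with hP2def
  set Dc : ℂ → ℂ := pol6 b 0 0 (4*e) 0 0 0 with hDcdef
  have hP : ∀ z : ℂ, HasDerivAt P (P1 z) z := fun z => pol6_hasDerivAt _ _ _ _ _ _ _ z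
  have hP1 : ∀ z : ℂ, HasDerivAt P1 (P2 z) z := fun z => pol6_hasDerivAt _ _ _ _ _ _ _ z
  have hDcd : ∀ z : ℂ, HasDerivAt Dc (12*e*z^2) z := by
    intro z
    have h := pol6_hasDerivAt b 0 0 (4*e) 0 0 0 z
    have hv : pol6 0 (2*0) (3*(4*e)) (4*0) (5*0) (6*0) 0 z = 12*e*z^2 := by
      simp only [pol6]; ring
    exact hv ▸ h
  have hDeq : ∀ z : ℂ, D₄ z = Dc z := by
    intro z; rw [hD₄, hDcdef]; simp only [pol6]; ring
  set Qf : ℂ → ℂ := fun t => P1 t * Dc t - 36*e*t^2 * P t with hQfdef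
  set Qd : ℂ → ℂ := fun t => P2 t * Dc t + P1 t * (12*e*t^2) - (72*e*t * P t + 36*e*t^2 * P1 t) with hQddef
  have hQ : ∀ z : ℂ, HasDerivAt Qf (Qd z) z := by
    intro z
    have h := ((hP1 z).mul (hDcd z)).sub
      ((((hasDerivAt_pow 2 z).const_mul (36*e)).mul (hP z)))
    have hv : P2 z * Dc z + P1 z * (12*e*z^2) - (36*e*(↑(2:ℕ) * z ^ (2-1)) * P z + 36*e*z^2 * P1 z)
        = Qd z := by
      rw [hQddef]; push_cast; ring
    exact hv ▸ h
  -- y as a quotient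
  have hyfun : y = fun t => P t / Dc t ^ 3 := by
    funext t
    rw [hy, hN₄₁, hN₄₂, hN₄₃, hD₄, hPdef, hDcdef]
    simp only [pol6]
    ring
  -- first derivative on U
  have hyder : ∀ x ∈ U, HasDerivAt y (Qf x / Dc x ^ 4) x := by
    intro x hx
    have hd : Dc x ≠ 0 := (hDeq x) ▸ hDU x hx
    have h := (hP x).div ((hDcd x).pow 3) (pow_ne_zero 3 hd)
    have hv : (P1 x * Dc x ^ 3 - P x * (↑(3:ℕ) * Dc x ^ (3-1) * (12*e*x^2))) / (Dc x ^ 3) ^ 2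
        = Qf x / Dc x ^ 4 := by
      rw [hQfdef]
      field_simp
      ring
    rw [hyfun]
    exact hv ▸ h
  -- second derivative on U
  have hy2 : ∀ x ∈ U, iteratedDeriv 2 y x = (Qd x * Dc x - 48*e*x^2 * Qf x) / Dc x ^ 5 := by
    intro x hx
    have hd : Dc x ≠ 0 := (hDeq x) ▸ hDU x hx
    have hloc : deriv y =ᶠ[nhds x] (fun t => Qf t / Dc t ^ 4) := by
      filter_upwards [hU.mem_nhds hx] with z hz
      exact (hyder z hz).deriv
    have h := (hQ x).div ((hDcd x).pow 4) (pow_ne_zero 4 hd)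
    have h4 : deriv (fun t => Qf t / Dc t ^ 4) x
        = (Qd x * Dc x - 48*e*x^2 * Qf x) / Dc x ^ 5 := by
      rw [show deriv (fun t => Qf t / Dc t ^ 4) x = _ from h.deriv]
      simp only [Pi.pow_apply]
      field_simp
      ring
    have h2 : iteratedDeriv 2 y = deriv (deriv y) := by
      rw [show (2:ℕ) = 1 + 1 from rfl, iteratedDeriv_succ, iteratedDeriv_one]
    rw [h2, hloc.deriv_eq, h4]
  -- the polynomial whose vanishing encodes NL4
  set p : Polynomial ℂ :=
    Polynomial.C (1*b^4*K₁^2 + 2*b^5*K₂*K₃) * Polynomial.X ^ 0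
    + Polynomial.C (6*b^4*K₁*K₂ + (-168)*b^5*e*K₃^2) * Polynomial.X ^ 1
    + Polynomial.C (6*b^4*K₂^2 + (-492)*b^4*e*K₁*K₃) * Polynomial.X ^ 2
    + Polynomial.C ((-212)*b^3*e*K₁^2 + (-704)*b^4*e*K₂*K₃) * Polynomial.X ^ 3
    + Polynomial.C ((-432)*b^3*e*K₁*K₂ + 15936*b^4*e^2*K₃^2) * Polynomial.X ^ 4
    + Polynomial.C ((-156)*b^3*e*K₂^2 + 15024*b^3*e^2*K₁*K₃) * Polynomial.X ^ 5
    + Polynomial.C (2688*b^2*e^2*K₁^2 + 7784*b^3*e^2*K₂*K₃) * Polynomial.X ^ 6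
    + Polynomial.C (1728*b^2*e^2*K₁*K₂ + (-63744)*b^3*e^3*K₃^2) * Polynomial.X ^ 7
    + Polynomial.C ((-36)*b^2*e^2*K₂^2 + (-4032)*b^2*e^3*K₁*K₃) * Polynomial.X ^ 8
    + Polynomial.C (6016*b*e^3*K₁^2 + 20576*b^2*e^3*K₂*K₃) * Polynomial.X ^ 9
    + Polynomial.C (10176*b*e^3*K₁*K₂ + (-390912)*b^2*e^4*K₃^2) * Polynomial.X ^ 10
    + Polynomial.C (2256*b*e^3*K₂^2 + (-257280)*b*e^4*K₁*K₃) * Polynomial.X ^ 11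
    + Polynomial.C ((-32768)*e^4*K₁^2 + (-80768)*b*e^4*K₂*K₃) * Polynomial.X ^ 12
    + Polynomial.C ((-16128)*e^4*K₁*K₂ + 494592*b*e^5*K₃^2) * Polynomial.X ^ 13
    + Polynomial.C ((-1920)*e^4*K₂^2 + 122880*e^5*K₁*K₃) * Polynomial.X ^ 14
    + Polynomial.C (28160*e^5*K₂*K₃) * Polynomial.X ^ 15
    + Polynomial.C ((-98304)*e^6*K₃^2) * Polynomial.X ^ 16 with hpdef
  have hroot : ∀ x ∈ U, p.eval x = 0 := by
    intro x hx
    have hd : Dc x ≠ 0 := (hDeq x) ▸ hDU x hx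
    have hE := hNL4 x hx
    have e1 : y x = P x / Dc x ^ 3 := by rw [hyfun]
    have e2 : deriv y x = Qf x / Dc x ^ 4 := (hyder x hx).deriv
    have e3 : iteratedDeriv 2 y x = (Qd x * Dc x - 48*e*x^2 * Qf x) / Dc x ^ 5 := hy2 x hx
    have hb4 : b + 4*e*x^3 = Dc x := by rw [hDcdef]; simp only [pol6]; ring
    rw [e1, e2, e3, hb4] at hE
    have key : 72*e*x*(P x)^2*Dc x + (Qf x)^2 + 84*e*x^2*(P x)*(Qf x)
        + P x * ((Qd x * Dc x - 48*e*x^2 * Qf x)) = 0 := by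
      have hcalc : 72*e*x*(P x)^2*Dc x + (Qf x)^2 + 84*e*x^2*(P x)*(Qf x)
          + P x * ((Qd x * Dc x - 48*e*x^2 * Qf x))
          = Dc x ^ 7 * (72 * e * x * (P x / Dc x ^ 3) ^ 2
            + Dc x * (Qf x / Dc x ^ 4) ^ 2
            + 84 * e * x ^ 2 * (P x / Dc x ^ 3) * (Qf x / Dc x ^ 4)
            + Dc x * (P x / Dc x ^ 3) * ((Qd x * Dc x - 48*e*x^2 * Qf x) / Dc x ^ 5)) := by
        field_simp [hd]
      rw [hcalc, hE, mul_zero]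
    simp only [hpdef, Polynomial.eval_add, Polynomial.eval_mul, Polynomial.eval_pow,
      Polynomial.eval_C, Polynomial.eval_X]
    simp only [hQfdef, hQddef, hPdef, hP1def, hP2def, hDcdef, pol6] at key
    linear_combination key
  -- U is infinite
  have hUinf : U.Infinite := by
    obtain ⟨x₀, hx₀⟩ := hUne
    obtain ⟨ε, hε, hball⟩ := Metric.isOpen_iff.mp hU x₀ hx₀
    have hpre : IsPreconnected (Metric.ball x₀ ε) := (convex_ball x₀ ε).isPreconnected
    have hnt : (Metric.ball x₀ ε).Nontrivial := by
      refine ⟨x₀, Metric.mem_ball_self hε, x₀ + ((ε/2 : ℝ) : ℂ), ?_, ?_⟩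
      · rw [Metric.mem_ball, dist_eq_norm]
        have : x₀ + ((ε/2 : ℝ) : ℂ) - x₀ = ((ε/2 : ℝ) : ℂ) := by ring
        rw [this, Complex.norm_real, Real.norm_eq_abs, abs_of_pos (by linarith)]
        linarith
      · intro h
        have : ((ε/2 : ℝ) : ℂ) = 0 := by linear_combination -h
        have : (ε/2 : ℝ) = 0 := by exact_mod_cast this
        linarith
    exact ((hpre.infinite_of_nontrivial hnt).mono hball)
  have hp0 : p = 0 := p.eq_zero_of_infinite_isRoot (by
    apply hUinf.mono
    intro x hx
    exact hroot x hx)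
  -- extract coefficients
  have hK₃ : K₃ = 0 := by
    have h := congrArg (fun q => Polynomial.coeff q 16) hp0
    simp only [hpdef, Polynomial.coeff_add, Polynomial.coeff_C_mul, Polynomial.coeff_X_pow,
      Polynomial.coeff_zero] at h
    norm_num at h
    exact h.resolve_left he
  have hc14 : (-1920)*e^4*K₂^2 + 122880*e^5*K₁*K₃ = 0 := by
    have h := congrArg (fun q => Polynomial.coeff q 14) hp0
    simp only [hpdef, Polynomial.coeff_add, Polynomial.coeff_C_mul, Polynomial.coeff_X_pow,
      Polynomial.coeff_zero] at h
    norm_num at h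
    linear_combination h
  have hK₂ : K₂ = 0 := by
    have h2 : K₂ ^ 2 = 0 := by
      have h6 : ((-1920):ℂ) * e^4 ≠ 0 := mul_ne_zero (by norm_num) (pow_ne_zero _ he)
      have : ((-1920):ℂ) * e^4 * K₂^2 = 0 := by
        rw [hK₃] at hc14; linear_combination hc14
      exact (mul_eq_zero.mp this).resolve_left h6
    exact pow_eq_zero_iff (by norm_num) |>.mp h2
  have hc12 : (-32768)*e^4*K₁^2 + (-80768)*b*e^4*K₂*K₃ = 0 := by
    have h := congrArg (fun q => Polynomial.coeff q 12) hp0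
    simp only [hpdef, Polynomial.coeff_add, Polynomial.coeff_C_mul, Polynomial.coeff_X_pow,
      Polynomial.coeff_zero] at h
    norm_num at h
    linear_combination h
  have hK₁ : K₁ = 0 := by
    have h2 : K₁ ^ 2 = 0 := by
      have h6 : ((-32768):ℂ) * e^4 ≠ 0 := mul_ne_zero (by norm_num) (pow_ne_zero _ he)
      have : ((-32768):ℂ) * e^4 * K₁^2 = 0 := by
        rw [hK₃] at hc12; linear_combination hc12
      exact (mul_eq_zero.mp this).resolve_left h6
    exact pow_eq_zero_iff (by norm_num) |>.mp h2
  exact ⟨hK₁, hK₂, hK₃⟩
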